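/- The action of the group GL(3, F₂) on the projective plane ℙ²(F₈) — where a matrix over F₂ acts on ℙ²(F₈) via the entrywise inclusion F₂ ↪ F₈ — has exactly three orbits. -/

import Mathlib

noncomputable section

abbrev F₂ : Type := ZMod 2
abbrev F₈ : Type := GaloisField 2 3

/-- The projective plane over `F₈`. -/
abbrev ProjPlane : Type := Projectivization F₈ (Fin 3 → F₈)

/-- `GL(3, F₂)` mapped into the group of `F₈`-linear automorphisms of `F₈³`,
via the entrywise inclusion `F₂ ↪ F₈`. -/
def actHom : GL (Fin 3) F₂ →* ((Fin 3 → F₈) ≃ₗ[F₈] (Fin 3 → F₈)) :=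
  ((LinearMap.GeneralLinearGroup.generalLinearEquiv F₈ (Fin 3 → F₈)).toMonoidHom.comp
      (Matrix.GeneralLinearGroup.toLin (n := Fin 3) (R := F₈)).toMonoidHom).comp
    (Units.map ((algebraMap F₂ F₈).mapMatrix).toMonoidHom)

/-- The action of `GL(3, F₂)` on the projective plane `ℙ²(F₈)`. -/
instance : MulAction (GL (Fin 3) F₂) ProjPlane where
  smul g p := p.map (actHom g).toLinearMap (actHom g).injective
  one_smul p := by
    show p.map (actHom 1).toLinearMap (actHom 1).injective = p
    simp only [map_one]
    exact congrFun Projectivization.map_id p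
  mul_smul g h p := by
    show p.map (actHom (g * h)).toLinearMap (actHom (g * h)).injective = _
    simp only [map_mul]
    exact congrFun (Projectivization.map_comp (actHom h).toLinearMap (actHom h).injective
      (actHom g).toLinearMap (actHom g).injective) p

namespace ThreeOrbits

inductive K : Type where
  | x0 | x1 | x2 | x3 | x4 | x5 | x6 | x7
deriving DecidableEq, Repr

instance : Fintype K where
  elems := ⟨(([K.x0, K.x1, K.x2, K.x3, K.x4, K.x5, K.x6, K.x7] : List K) : Multiset K), by decide⟩
  complete := by intro x; cases x <;> decide

namespace K

def add : K → K → K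
  | x0, x0 => x0
  | x0, x1 => x1
  | x0, x2 => x2
  | x0, x3 => x3
  | x0, x4 => x4
  | x0, x5 => x5
  | x0, x6 => x6
  | x0, x7 => x7
  | x1, x0 => x1
  | x1, x1 => x0
  | x1, x2 => x3
  | x1, x3 => x2
  | x1, x4 => x5
  | x1, x5 => x4
  | x1, x6 => x7
  | x1, x7 => x6
  | x2, x0 => x2
  | x2, x1 => x3
  | x2, x2 => x0
  | x2, x3 => x1
  | x2, x4 => x6
  | x2, x5 => x7
  | x2, x6 => x4
  | x2, x7 => x5
  | x3, x0 => x3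
  | x3, x1 => x2
  | x3, x2 => x1
  | x3, x3 => x0
  | x3, x4 => x7
  | x3, x5 => x6
  | x3, x6 => x5
  | x3, x7 => x4
  | x4, x0 => x4
  | x4, x1 => x5
  | x4, x2 => x6
  | x4, x3 => x7
  | x4, x4 => x0
  | x4, x5 => x1
  | x4, x6 => x2
  | x4, x7 => x3
  | x5, x0 => x5
  | x5, x1 => x4
  | x5, x2 => x7
  | x5, x3 => x6
  | x5, x4 => x1
  | x5, x5 => x0
  | x5, x6 => x3
  | x5, x7 => x2
  | x6, x0 => x6
  | x6, x1 => x7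
  | x6, x2 => x4
  | x6, x3 => x5
  | x6, x4 => x2
  | x6, x5 => x3
  | x6, x6 => x0
  | x6, x7 => x1
  | x7, x0 => x7
  | x7, x1 => x6
  | x7, x2 => x5
  | x7, x3 => x4
  | x7, x4 => x3
  | x7, x5 => x2
  | x7, x6 => x1
  | x7, x7 => x0

def mul : K → K → K
  | x0, x0 => x0
  | x0, x1 => x0
  | x0, x2 => x0
  | x0, x3 => x0
  | x0, x4 => x0
  | x0, x5 => x0
  | x0, x6 => x0
  | x0, x7 => x0
  | x1, x0 => x0
  | x1, x1 => x1
  | x1, x2 => x2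
  | x1, x3 => x3
  | x1, x4 => x4
  | x1, x5 => x5
  | x1, x6 => x6
  | x1, x7 => x7
  | x2, x0 => x0
  | x2, x1 => x2
  | x2, x2 => x4
  | x2, x3 => x6
  | x2, x4 => x3
  | x2, x5 => x1
  | x2, x6 => x7
  | x2, x7 => x5
  | x3, x0 => x0
  | x3, x1 => x3
  | x3, x2 => x6
  | x3, x3 => x5
  | x3, x4 => x7
  | x3, x5 => x4
  | x3, x6 => x1
  | x3, x7 => x2
  | x4, x0 => x0
  | x4, x1 => x4
  | x4, x2 => x3
  | x4, x3 => x7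
  | x4, x4 => x6
  | x4, x5 => x2
  | x4, x6 => x5
  | x4, x7 => x1
  | x5, x0 => x0
  | x5, x1 => x5
  | x5, x2 => x1
  | x5, x3 => x4
  | x5, x4 => x2
  | x5, x5 => x7
  | x5, x6 => x3
  | x5, x7 => x6
  | x6, x0 => x0
  | x6, x1 => x6
  | x6, x2 => x7
  | x6, x3 => x1
  | x6, x4 => x5
  | x6, x5 => x3
  | x6, x6 => x2
  | x6, x7 => x4
  | x7, x0 => x0
  | x7, x1 => x7
  | x7, x2 => x5
  | x7, x3 => x2
  | x7, x4 => x1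
  | x7, x5 => x6
  | x7, x6 => x4
  | x7, x7 => x3

def inv : K → K
  | x0 => x0
  | x1 => x1
  | x2 => x5
  | x3 => x6
  | x4 => x7
  | x5 => x2
  | x6 => x3
  | x7 => x4
end K

open K

instance : Zero K := ⟨x0⟩
instance : One K := ⟨x1⟩
instance : Add K := ⟨K.add⟩
instance : Mul K := ⟨K.mul⟩
instance : Neg K := ⟨id⟩
instance : Inv K := ⟨K.inv⟩

instance instAddCommGroupK : AddCommGroup K where
  add_assoc := by decide
  zero_add := by decide
  add_zero := by decide
  add_comm := by decide
  neg_add_cancel := by decide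
  nsmul := nsmulRec
  zsmul := zsmulRec

instance instCommRingK : CommRing K where
  __ := instAddCommGroupK
  left_distrib := by decide
  right_distrib := by decide
  zero_mul := by decide
  mul_zero := by decide
  mul_assoc := by decide
  one_mul := by decide
  mul_one := by decide
  mul_comm := by decide

theorem kmic : ∀ a : K, a ≠ 0 → a * a⁻¹ = 1 := by decide
theorem kinvz : (0:K)⁻¹ = 0 := by decide

instance instFieldK : Field K where
  __ := instCommRingK
  mul_inv_cancel := kmic
  inv_zero := kinvz
  exists_pair_ne := ⟨x0, x1, by decide⟩
  qsmul := _
  nnqsmul := _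

def ι : ZMod 2 →+* K where
  toFun a := if a = 1 then 1 else 0
  map_one' := by decide
  map_mul' := by decide
  map_zero' := by decide
  map_add' := by decide

instance : Algebra (ZMod 2) K := ι.toAlgebra

theorem cardK : Nat.card K = 2 ^ 3 := by
  rw [Nat.card_eq_fintype_card]; decide

noncomputable def e : K ≃ₐ[ZMod 2] GaloisField 2 3 :=
  GaloisField.algEquivGaloisField 2 3 cardK

abbrev V : Type := Fin 3 → K

def S (v : V) : V := fun i => v i * v i

def det3 (v w u : V) : K :=
  v 0 * w 1 * u 2 + v 0 * w 2 * u 1 + v 1 * w 0 * u 2 + v 1 * w 2 * u 0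
    + v 2 * w 0 * u 1 + v 2 * w 1 * u 0

def eps (i : Fin 3) : V := fun j => if j = i then 1 else 0

def Avec : V := ![x1, x0, x0]
def Bvec : V := ![x1, x2, x0]
def Cvec : V := ![x1, x2, x4]

-- basic small decides
theorem sq_sq_sq (x : K) : ((x*x)*(x*x))*((x*x)*(x*x)) = x := by revert x; decide
theorem sq_idem (x : K) : x * x = x → x = 0 ∨ x = 1 := by revert x; decide

-- base point facts
theorem baseA : S Avec = Avec := by decide
theorem baseB1 : S (S Bvec) = fun i => x6 * Bvec i + x7 * S Bvec i := by decide
theorem baseB2 : det3 Bvec (S Bvec) (eps 2) ≠ 0 := by decide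
theorem baseB3 : ¬ ∃ c : K, c ≠ 0 ∧ S Bvec = fun i => c * Bvec i := by decide
theorem baseB4 : det3 Bvec (S Bvec) (S (S Bvec)) = 0 := by decide
theorem baseC1 : det3 Cvec (S Cvec) (S (S Cvec)) ≠ 0 := by decide
theorem baseC2 : ¬ ∃ c : K, c ≠ 0 ∧ S Cvec = fun i => c * Cvec i := by decide


def det3Z (m : Fin 3 → Fin 3 → ZMod 2) : ZMod 2 :=
  m 0 0 * m 1 1 * m 2 2 + m 0 0 * m 1 2 * m 2 1 + m 0 1 * m 1 0 * m 2 2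
    + m 0 1 * m 1 2 * m 2 0 + m 0 2 * m 1 0 * m 2 1 + m 0 2 * m 1 1 * m 2 0

set_option maxRecDepth 10000 in
-- transitivity on rational points: every nonzero u is the first column of an invertible matrix
theorem factA : ∀ u : Fin 3 → ZMod 2, u ≠ 0 →
    ∃ m : Fin 3 → Fin 3 → ZMod 2, det3Z m ≠ 0 ∧ (fun i => m i 0) = u := by decide


set_option maxRecDepth 40000 in
set_option maxHeartbeats 4000000 in
theorem factB : ∀ v : V, v ≠ 0 → (¬ ∃ c : K, c ≠ 0 ∧ S v = fun i => c * v i) →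
    det3 v (S v) (S (S v)) = 0 →
    ∃ c : K, c ≠ 0 ∧ (S (S (fun i => c * v i)) = fun i => x6 * (c * v i) + x7 * S (fun j => c * v j) i)
      ∧ ∃ i : Fin 3, det3 (fun j => c * v j) (S (fun j => c * v j)) (eps i) ≠ 0 := by decide


/-! ### Structural matrix lemmas -/

def sqHom : K →+* K where
  toFun x := x * x
  map_one' := by decide
  map_mul' := by decide
  map_zero' := by decide
  map_add' := by decide

theorem S_apply (v : V) (i : Fin 3) : S v i = sqHom (v i) := rfl

def M3 (v w u : V) : Matrix (Fin 3) (Fin 3) K := Matrix.of ![v, w, u]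

theorem ksub (x y : K) : x - y = x + y := by revert x y; decide

theorem M3_row0 (v w u : V) : M3 v w u 0 = v := rfl
theorem M3_row1 (v w u : V) : M3 v w u 1 = w := rfl
theorem M3_row2 (v w u : V) : M3 v w u 2 = u := rfl

theorem det3_eq (v w u : V) : (M3 v w u).det = det3 v w u := by
  rw [Matrix.det_fin_three]
  simp only [M3, Matrix.of_apply, Matrix.cons_val', Matrix.cons_val_zero, Matrix.cons_val_one,
    Matrix.head_cons, Matrix.head_fin_const, Matrix.empty_val', Matrix.cons_val_fin_one,
    Matrix.cons_val_two, Matrix.tail_cons, ksub, det3]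
  try ring

def ιM (m : Fin 3 → Fin 3 → ZMod 2) : Matrix (Fin 3) (Fin 3) K :=
  Matrix.of fun i j => ι (m i j)

theorem ι_sq (a : ZMod 2) : sqHom (ι a) = ι a := by revert a; decide
theorem ι_eq_zero (a : ZMod 2) : ι a = 0 → a = 0 := by revert a; decide

theorem zsub (x y : ZMod 2) : x - y = x + y := by revert x y; decide

theorem detι (m : Fin 3 → Fin 3 → ZMod 2) : (ιM m).det = ι (det3Z m) := by
  rw [Matrix.det_fin_three]
  simp only [ιM, Matrix.of_apply, det3Z, map_add, map_mul, ksub]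
  try ring

theorem S_mulVec (m : Fin 3 → Fin 3 → ZMod 2) (v : V) :
    S ((ιM m).mulVec v) = (ιM m).mulVec (S v) := by
  funext i
  simp only [S_apply, Matrix.mulVec, dotProduct, map_sum, map_mul, ι_sq, ιM,
    Matrix.of_apply]

theorem map_inv_comm (M : Matrix (Fin 3) (Fin 3) K) (h : IsUnit M.det) :
    M⁻¹.map ⇑sqHom = (M.map ⇑sqHom)⁻¹ := by
  symm
  apply Matrix.inv_eq_right_inv
  rw [← Matrix.map_mul, Matrix.mul_nonsing_inv _ h]
  exact Matrix.map_one _ (map_zero sqHom) (map_one sqHom)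

theorem core (X Y C : Matrix (Fin 3) (Fin 3) K) (hX : X.map ⇑sqHom = C * X)
    (hY : Y.map ⇑sqHom = C * Y) (hYd : IsUnit Y.det) (hCd : IsUnit C.det) :
    (Y⁻¹ * X).map ⇑sqHom = Y⁻¹ * X ∧ Y * (Y⁻¹ * X) = X := by
  constructor
  · rw [Matrix.map_mul, map_inv_comm _ hYd, hX, hY, Matrix.mul_inv_rev, mul_assoc,
      ← mul_assoc C⁻¹, Matrix.nonsing_inv_mul _ hCd, one_mul]
  · rw [← mul_assoc, Matrix.mul_nonsing_inv _ hYd, one_mul]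


def Pm : Matrix (Fin 3) (Fin 3) K := M3 (eps 1) (eps 2) (eps 0)
def Cm : Matrix (Fin 3) (Fin 3) K := M3 (eps 1) ![x6, x7, x0] (eps 2)

theorem S_eps (i : Fin 3) : S (eps i) = eps i := by
  funext j
  simp only [S, eps]
  split <;> decide

theorem fin3cases (i : Fin 3) : i = 0 ∨ i = 1 ∨ i = 2 := by omega

theorem mul_apply3 (A B : Matrix (Fin 3) (Fin 3) K) (i j : Fin 3) :
    (A * B) i j = A i 0 * B 0 j + A i 1 * B 1 j + A i 2 * B 2 j := by
  rw [Matrix.mul_apply, Fin.sum_univ_three]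

theorem mapMr (v : V) :
    (M3 v (S v) (S (S v))).map ⇑sqHom = Pm * M3 v (S v) (S (S v)) := by
  funext i j
  rw [Matrix.map_apply, mul_apply3]
  rcases fin3cases i with h | h | h <;> subst h <;>
    simp only [Pm, M3_row0, M3_row1, M3_row2, M3, Matrix.of_apply, Matrix.cons_val_zero,
      Matrix.cons_val_one, Matrix.head_cons, Matrix.cons_val_two, Matrix.tail_cons, eps]
  · show sqHom (v j) = (0:K) * v j + 1 * S v j + 0 * S (S v) j
    rw [S_apply]; ring
  · show sqHom (S v j) = (0:K) * v j + 0 * S v j + 1 * S (S v) j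
    rw [← S_apply]; ring
  · show sqHom (S (S v) j) = (1:K) * v j + 0 * S v j + 0 * S (S v) j
    have : sqHom (S (S v) j) = v j := sq_sq_sq (v j)
    rw [this]; ring

theorem mapM' (v r : V) (hrel : S (S v) = fun i => x6 * v i + x7 * S v i) (hr : S r = r) :
    (M3 v (S v) r).map ⇑sqHom = Cm * M3 v (S v) r := by
  funext i j
  rw [Matrix.map_apply, mul_apply3]
  rcases fin3cases i with h | h | h <;> subst h <;>
    simp only [Cm, M3_row0, M3_row1, M3_row2, M3, Matrix.of_apply, Matrix.cons_val_zero,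
      Matrix.cons_val_one, Matrix.head_cons, Matrix.cons_val_two, Matrix.tail_cons, eps]
  · show sqHom (v j) = (0:K) * v j + 1 * S v j + 0 * r j
    rw [S_apply]; ring
  · show sqHom (S v j) = x6 * v j + x7 * S v j + x0 * r j
    have : sqHom (S v j) = S (S v) j := rfl
    rw [this, hrel]
    show x6 * v j + x7 * S v j = _
    have h0 : (x0 : K) = 0 := rfl
    rw [h0]; ring
  · show sqHom (r j) = (0:K) * v j + 0 * S v j + 1 * r j
    have : sqHom (r j) = S r j := rfl
    rw [this, hr]; ring

theorem transfer (C : Matrix (Fin 3) (Fin 3) K) (v rv w rw : V)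
    (hX : (M3 v (S v) rv).map ⇑sqHom = C * M3 v (S v) rv)
    (hY : (M3 w (S w) rw).map ⇑sqHom = C * M3 w (S w) rw)
    (hdY : det3 w (S w) rw ≠ 0) (hdX : det3 v (S v) rv ≠ 0) (hdC : C.det ≠ 0) :
    ∃ m : Fin 3 → Fin 3 → ZMod 2, det3Z m ≠ 0 ∧ (ιM m).mulVec w = v := by
  set X := M3 v (S v) rv with hXdef
  set Y := M3 w (S w) rw with hYdef
  have hYu : IsUnit Y.det := by rw [isUnit_iff_ne_zero, hYdef, det3_eq]; exact hdY
  have hCu : IsUnit C.det := isUnit_iff_ne_zero.mpr hdC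
  obtain ⟨hB, hYB⟩ := core X Y C hX hY hYu hCu
  set B := Y⁻¹ * X with hBdef
  -- entries of B are idempotent
  have hent : ∀ i j, B i j = 0 ∨ B i j = 1 := by
    intro i j
    apply sq_idem
    have := congrFun (congrFun hB i) j
    rwa [Matrix.map_apply] at this
  refine ⟨fun i j => if B j i = 1 then 1 else 0, ?_, ?_⟩
  · -- det3Z nonzero
    intro hz
    have hBt : ιM (fun i j => if B j i = 1 then 1 else 0) = B.transpose := by
      funext i j
      simp only [ιM, Matrix.of_apply, Matrix.transpose_apply]
      rcases hent j i with h | h <;> rw [h]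
      · rw [if_neg (by decide), show ι 0 = 0 from rfl]
      · rw [if_pos rfl, show ι 1 = 1 from rfl]
    have hdB : B.det ≠ 0 := by
      rw [hBdef, Matrix.det_mul, Matrix.det_nonsing_inv, Ring.inverse_eq_inv']
      refine mul_ne_zero (inv_ne_zero ?_) ?_
      · rw [hYdef, det3_eq]; exact hdY
      · rw [hXdef, det3_eq]; exact hdX
    have := detι (fun i j => if B j i = 1 then 1 else 0)
    rw [hBt, Matrix.det_transpose, hz] at this
    exact hdB (this.trans (show ι 0 = 0 from rfl))
  · -- mulVec equation
    have hBt : ιM (fun i j => if B j i = 1 then 1 else 0) = B.transpose := by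
      funext i j
      simp only [ιM, Matrix.of_apply, Matrix.transpose_apply]
      rcases hent j i with h | h <;> rw [h]
      · rw [if_neg (by decide), show ι 0 = 0 from rfl]
      · rw [if_pos rfl, show ι 1 = 1 from rfl]
    rw [hBt]
    funext j
    have h1 : (Y * B) 0 j = X 0 j := by rw [hYB]
    rw [mul_apply3] at h1
    have h2 : X 0 j = v j := rfl
    have h3 : B.transpose.mulVec w j = w 0 * B 0 j + w 1 * B 1 j + w 2 * B 2 j := by
      rw [Matrix.mulVec, dotProduct, Fin.sum_univ_three]
      simp only [Matrix.transpose_apply]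
      ring
    rw [h3, ← h2, ← h1]
    rfl


/-! ### The relation and the main three facts -/

def Rv (v w : V) : Prop :=
  ∃ m : Fin 3 → Fin 3 → ZMod 2, det3Z m ≠ 0 ∧
    ∃ c : K, c ≠ 0 ∧ v = fun i => c * (ιM m).mulVec w i

theorem S_scale (c : K) (v : V) :
    S (fun i => c * v i) = fun i => (c * c) * S v i := by
  funext i; show (c * v i) * (c * v i) = (c*c) * (v i * v i); ring

theorem det3_scale (a b c : K) (x y z : V) :
    det3 (fun i => a * x i) (fun i => b * y i) (fun i => c * z i)
      = a * b * c * det3 x y z := by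
  simp only [det3]; ring

theorem M3_mulVec (m : Fin 3 → Fin 3 → ZMod 2) (x y z : V) :
    M3 ((ιM m).mulVec x) ((ιM m).mulVec y) ((ιM m).mulVec z)
      = M3 x y z * (ιM m).transpose := by
  funext i j
  rw [mul_apply3]
  simp only [Matrix.transpose_apply]
  have hmv : ∀ w : V, (ιM m).mulVec w j = ιM m j 0 * w 0 + ιM m j 1 * w 1 + ιM m j 2 * w 2 := by
    intro w; rw [Matrix.mulVec, dotProduct, Fin.sum_univ_three]
  rcases fin3cases i with h | h | h <;> subst h <;>
    simp only [M3_row0, M3_row1, M3_row2] <;> rw [hmv] <;> ring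

theorem det3_mulVec (m : Fin 3 → Fin 3 → ZMod 2) (x y z : V) :
    det3 ((ιM m).mulVec x) ((ιM m).mulVec y) ((ιM m).mulVec z)
      = ι (det3Z m) * det3 x y z := by
  rw [← det3_eq, ← det3_eq, M3_mulVec, Matrix.det_mul, Matrix.det_transpose, detι, mul_comm]

theorem mulVec_scale (m : Fin 3 → Fin 3 → ZMod 2) (d : K) (w : V) :
    (ιM m).mulVec (fun i => d * w i) = fun i => d * (ιM m).mulVec w i := by
  funext i
  rw [Matrix.mulVec, Matrix.mulVec, dotProduct, dotProduct,
    Fin.sum_univ_three, Fin.sum_univ_three]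
  ring

theorem inv0 {v w : V} (h : Rv v w) (hw : ∃ d : K, d ≠ 0 ∧ S w = fun i => d * w i) :
    ∃ d' : K, d' ≠ 0 ∧ S v = fun i => d' * v i := by
  obtain ⟨m, _, c, hc, rfl⟩ := h
  obtain ⟨d, hd, hSw⟩ := hw
  refine ⟨c * d, mul_ne_zero hc hd, ?_⟩
  rw [S_scale, S_mulVec, hSw, mulVec_scale]
  funext i
  ring

theorem Sv_of_scale_mulVec (m : Fin 3 → Fin 3 → ZMod 2) (c : K) (w : V) :
    S (fun i => c * (ιM m).mulVec w i) = fun i => (c * c) * (ιM m).mulVec (S w) i := by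
  rw [S_scale, S_mulVec]

theorem inv1 {v w : V} (h : Rv v w) :
    det3 v (S v) (S (S v)) = 0 ↔ det3 w (S w) (S (S w)) = 0 := by
  obtain ⟨m, hm, c, hc, rfl⟩ := h
  have h1 := Sv_of_scale_mulVec m c w
  have h2 : S (S fun i => c * (ιM m).mulVec w i)
      = fun i => (c*c*(c*c)) * (ιM m).mulVec (S (S w)) i := by
    rw [h1, Sv_of_scale_mulVec]
  rw [h2, h1, det3_scale, det3_mulVec]
  have hcnz : c * (c * c) * (c * c * (c * c)) ≠ 0 :=
    mul_ne_zero (mul_ne_zero hc (mul_ne_zero hc hc))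
      (mul_ne_zero (mul_ne_zero hc hc) (mul_ne_zero hc hc))
  constructor
  · intro hz
    rcases mul_eq_zero.mp hz with h' | h'
    · exact absurd h' hcnz
    · rcases mul_eq_zero.mp h' with h'' | h''
      · exact absurd (ι_eq_zero _ h'') hm
      · exact h''
  · intro hz
    rw [hz, mul_zero, mul_zero]

theorem cover : ∀ v : V, v ≠ 0 → Rv v Avec ∨ Rv v Bvec ∨ Rv v Cvec := by
  intro v hv
  by_cases hα : ∃ c : K, c ≠ 0 ∧ S v = fun i => c * v i
  · left
    obtain ⟨c, hc, hS⟩ := hα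
    set w : V := fun i => c⁻¹ * v i with hwdef
    have hcc : c⁻¹ * c⁻¹ * c = c⁻¹ := by field_simp
    have hSw : S w = w := by
      funext i
      show (c⁻¹ * v i) * (c⁻¹ * v i) = c⁻¹ * v i
      have : v i * v i = c * v i := congrFun hS i
      calc (c⁻¹ * v i) * (c⁻¹ * v i) = c⁻¹ * c⁻¹ * (v i * v i) := by ring
        _ = c⁻¹ * c⁻¹ * (c * v i) := by rw [this]
        _ = (c⁻¹ * c⁻¹ * c) * v i := by ring
        _ = c⁻¹ * v i := by rw [hcc]
    have hent : ∀ i, w i = 0 ∨ w i = 1 := fun i => sq_idem _ (congrFun hSw i)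
    set u : Fin 3 → ZMod 2 := fun i => if w i = 1 then 1 else 0 with hudef
    have hιu : ∀ i, ι (u i) = w i := by
      intro i
      rcases hent i with h | h <;> rw [hudef] <;> simp only
      · rw [h, if_neg (by decide)]; rfl
      · rw [h, if_pos rfl]; rfl
    have hu : u ≠ 0 := by
      intro h0
      obtain ⟨j, hj⟩ := Function.ne_iff.mp hv
      have : w j = 0 := by rw [← hιu j, h0]; rfl
      have : v j = 0 := by
        have h' : c⁻¹ * v j = 0 := this
        rcases mul_eq_zero.mp h' with h'' | h''
        · exact absurd h'' (inv_ne_zero hc)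
        · exact h''
      exact hj this
    obtain ⟨m, hm, hcol⟩ := factA u hu
    refine ⟨m, hm, c, hc, ?_⟩
    have hmv : (ιM m).mulVec Avec = w := by
      funext i
      rw [Matrix.mulVec, dotProduct, Fin.sum_univ_three]
      show ι (m i 0) * x1 + ι (m i 1) * x0 + ι (m i 2) * x0 = w i
      rw [← hιu i, ← congrFun hcol i]
      show ι (m i 0) * 1 + ι (m i 1) * 0 + ι (m i 2) * 0 = ι (m i 0)
      ring
    rw [hmv]
    funext i
    show v i = c * (c⁻¹ * v i)
    field_simp
  · by_cases hdet : det3 v (S v) (S (S v)) = 0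
    · right; left
      obtain ⟨c, hc, hrel, i0, hd⟩ := factB v hv hα hdet
      have hX := mapM' (fun i => c * v i) (eps i0) hrel (S_eps i0)
      have hY := mapM' Bvec (eps 2) baseB1 (S_eps 2)
      have hdC : Cm.det ≠ 0 := by rw [Cm, det3_eq]; decide
      obtain ⟨m, hm, hmv⟩ := transfer Cm (fun i => c * v i) (eps i0) Bvec (eps 2)
        hX hY baseB2 hd hdC
      refine ⟨m, hm, c⁻¹, inv_ne_zero hc, ?_⟩
      rw [hmv]
      funext i
      show v i = c⁻¹ * (c * v i)
      field_simp
    · right; right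
      have hX := mapMr v
      have hY := mapMr Cvec
      have hdC : Pm.det ≠ 0 := by rw [Pm, det3_eq]; decide
      obtain ⟨m, hm, hmv⟩ := transfer Pm v (S (S v)) Cvec (S (S Cvec))
        hX hY baseC1 hdet hdC
      refine ⟨m, hm, 1, one_ne_zero, ?_⟩
      rw [hmv]
      funext i
      show v i = 1 * v i
      rw [one_mul]

theorem notBA : ¬ Rv Bvec Avec := by
  intro h
  exact baseB3 (inv0 h ⟨1, one_ne_zero, by rw [baseA]; funext i; rw [one_mul]⟩)

theorem notCA : ¬ Rv Cvec Avec := by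
  intro h
  exact baseC2 (inv0 h ⟨1, one_ne_zero, by rw [baseA]; funext i; rw [one_mul]⟩)

theorem notCB : ¬ Rv Cvec Bvec := by
  intro h
  exact baseC1 ((inv1 h).mpr baseB4)


/-! ### Transport to the projective plane over F₈ -/

theorem det3Z_eq (m : Fin 3 → Fin 3 → ZMod 2) : (Matrix.of m).det = det3Z m := by
  rw [Matrix.det_fin_three]
  simp only [Matrix.of_apply, zsub, det3Z]
  try ring

theorem mulVec_ne_zero (m : Fin 3 → Fin 3 → ZMod 2) (hm : det3Z m ≠ 0) {v : V}
    (hv : v ≠ 0) : (ιM m).mulVec v ≠ 0 := by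
  intro h0
  apply hv
  have hu : IsUnit (ιM m).det := by
    rw [detι]
    exact isUnit_iff_ne_zero.mpr fun h => hm (ι_eq_zero _ h)
  have h1 := congrArg (fun u => (ιM m)⁻¹.mulVec u) h0
  rw [Matrix.mulVec_mulVec, Matrix.nonsing_inv_mul _ hu, Matrix.one_mulVec,
    Matrix.mulVec_zero] at h1
  exact h1

theorem e_ne_zero {v : V} (hv : v ≠ 0) : (fun i => e (v i)) ≠ 0 := by
  intro h
  apply hv
  funext i
  have h1 : e (v i) = 0 := congrFun h i
  have h2 : e (v i) = e 0 := by rw [h1, map_zero]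
  exact e.injective h2

def ψ (v : V) (hv : v ≠ 0) : ProjPlane :=
  Projectivization.mk F₈ (fun i => e (v i)) (e_ne_zero hv)

theorem ψ_surj (x : ProjPlane) : ∃ (v : V) (hv : v ≠ 0), ψ v hv = x := by
  induction x using Projectivization.ind with
  | h v hv =>
    refine ⟨fun i => e.symm (v i), ?_, ?_⟩
    · intro h
      apply hv
      funext i
      have h1 : e.symm (v i) = 0 := congrFun h i
      have h2 : e.symm (v i) = e.symm 0 := by rw [h1, map_zero]
      exact e.symm.injective h2
    · unfold ψ
      simp only [show (fun i => e (e.symm (v i))) = v from funext fun i =>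
        e.apply_symm_apply (v i)]

theorem ψ_eq {v w : V} (hv : v ≠ 0) (hw : w ≠ 0) :
    ψ v hv = ψ w hw ↔ ∃ c : K, c ≠ 0 ∧ v = fun i => c * w i := by
  unfold ψ
  rw [Projectivization.mk_eq_mk_iff']
  constructor
  · rintro ⟨a, ha⟩
    refine ⟨e.symm a, ?_, ?_⟩
    · intro h0
      apply e_ne_zero hv
      funext i
      have h1 : a * e (w i) = e (v i) := congrFun ha i
      have h2 : a = 0 := by
        have := congrArg e h0
        rwa [e.apply_symm_apply, map_zero] at this
      rw [← h1, h2, zero_mul]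
      rfl
    · funext i
      have h1 : a * e (w i) = e (v i) := congrFun ha i
      apply e.injective
      rw [map_mul, e.apply_symm_apply, h1]
  · rintro ⟨c, hc, rfl⟩
    refine ⟨e c, funext fun i => ?_⟩
    show e c * e (w i) = e (c * w i)
    rw [map_mul]

theorem actHom_apply (g : GL (Fin 3) F₂) (x : Fin 3 → F₈) :
    (actHom g).toLinearMap x = (g.val.map (algebraMap F₂ F₈)).mulVec x := rfl

theorem e_comm (a : ZMod 2) : e (ι a) = algebraMap (ZMod 2) (GaloisField 2 3) a :=
  e.commutes a

theorem smul_ψ (g : GL (Fin 3) F₂) (v : V) (hv : v ≠ 0) (hg : det3Z (fun i j => g.val i j) ≠ 0) :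
    g • ψ v hv = ψ ((ιM fun i j => g.val i j).mulVec v) (mulVec_ne_zero _ hg hv) := by
  show (ψ v hv).map (actHom g).toLinearMap (actHom g).injective = _
  unfold ψ
  rw [Projectivization.map_mk]
  have key : (actHom g).toLinearMap (fun i => e (v i))
      = fun i => e ((ιM fun i j => g.val i j).mulVec v i) := by
    rw [actHom_apply]
    funext i
    rw [Matrix.mulVec, dotProduct, Fin.sum_univ_three,
      Matrix.mulVec, dotProduct, Fin.sum_univ_three]
    simp only [Matrix.map_apply, ιM, Matrix.of_apply, map_add, map_mul, e_comm]
  simp only [key]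

theorem g_det_ne (g : GL (Fin 3) F₂) : det3Z (fun i j => g.val i j) ≠ 0 := by
  have h1 : IsUnit g.val := ⟨g, rfl⟩
  have h2 : IsUnit g.val.det := (Matrix.isUnit_iff_isUnit_det _).mp h1
  have h3 : g.val.det ≠ 0 := isUnit_iff_ne_zero.mp h2
  have h4 : (Matrix.of fun i j => g.val i j) = g.val := rfl
  rw [← det3Z_eq, h4]
  exact h3

theorem orbit_iff {v w : V} (hv : v ≠ 0) (hw : w ≠ 0) :
    ψ v hv ∈ MulAction.orbit (GL (Fin 3) F₂) (ψ w hw) ↔ Rv v w := by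
  constructor
  · rintro ⟨g, hg⟩
    have hg' : g • ψ w hw = ψ v hv := hg
    have h1 := smul_ψ g w hw (g_det_ne g)
    rw [h1] at hg'
    have hg2 := hg'.symm
    rw [ψ_eq] at hg2
    obtain ⟨c, hc, hveq⟩ := hg2
    exact ⟨fun i j => g.val i j, g_det_ne g, c, hc, hveq⟩
  · rintro ⟨m, hm, c, hc, hveq⟩
    have hu : IsUnit (Matrix.of m) := by
      rw [Matrix.isUnit_iff_isUnit_det, isUnit_iff_ne_zero, det3Z_eq]
      exact hm
    refine ⟨hu.unit, ?_⟩
    show hu.unit • ψ w hw = ψ v hv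
    have hval : (hu.unit : GL (Fin 3) F₂).val = Matrix.of m := hu.unit_spec
    have h1 := smul_ψ hu.unit w hw (g_det_ne hu.unit)
    rw [h1]
    symm
    rw [ψ_eq]
    refine ⟨c, hc, ?_⟩
    have h2 : (ιM fun i j => (hu.unit : GL (Fin 3) F₂).val i j) = ιM m := by
      rw [show (fun i j => (hu.unit : GL (Fin 3) F₂).val i j) = m from by
        funext i j; rw [hval]; rfl]
    rw [h2]
    exact hveq

/-! ### Abstract three-orbit counting -/

theorem card_eq_three {G α : Type*} [Group G] [MulAction G α] (a b c : α)
    (hcov : ∀ x : α, x ∈ MulAction.orbit G a ∨ x ∈ MulAction.orbit G b ∨ x ∈ MulAction.orbit G c)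
    (hba : b ∉ MulAction.orbit G a) (hca : c ∉ MulAction.orbit G a)
    (hcb : c ∉ MulAction.orbit G b) :
    Nat.card (MulAction.orbitRel.Quotient G α) = 3 := by
  classical
  have symm : ∀ {x y : α}, x ∈ MulAction.orbit G y → y ∈ MulAction.orbit G x :=
    fun h => (MulAction.orbitRel G α).symm' h
  have trans : ∀ {x y z : α}, x ∈ MulAction.orbit G y → y ∈ MulAction.orbit G z →
      x ∈ MulAction.orbit G z := fun h1 h2 => (MulAction.orbitRel G α).trans' h1 h2
  let fa : α → Fin 3 := fun x =>
    if x ∈ MulAction.orbit G a then 0 else if x ∈ MulAction.orbit G b then 1 else 2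
  have wd : ∀ x y : α, (MulAction.orbitRel G α).r x y → fa x = fa y := by
    intro x y hxy
    have hxy' : x ∈ MulAction.orbit G y := hxy
    have hiff : ∀ z : α, (x ∈ MulAction.orbit G z ↔ y ∈ MulAction.orbit G z) := by
      intro z
      constructor
      · intro h; exact trans (symm hxy') h
      · intro h; exact trans hxy' h
    simp only [fa, hiff a, hiff b]
  let F : MulAction.orbitRel.Quotient G α → Fin 3 := Quotient.lift fa wd
  let Ginv : Fin 3 → MulAction.orbitRel.Quotient G α :=
    ![Quotient.mk _ a, Quotient.mk _ b, Quotient.mk _ c]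
  have eqv : MulAction.orbitRel.Quotient G α ≃ Fin 3 := by
    refine ⟨F, Ginv, ?_, ?_⟩
    · intro q
      induction q using Quotient.ind with
      | _ x =>
        by_cases h1 : x ∈ MulAction.orbit G a
        · have : F (Quotient.mk _ x) = 0 := by simp only [F, Quotient.lift_mk, fa, if_pos h1]
          rw [this]
          exact Quotient.sound (symm h1)
        · by_cases h2 : x ∈ MulAction.orbit G b
          · have : F (Quotient.mk _ x) = 1 := by
              simp only [F, Quotient.lift_mk, fa, if_neg h1, if_pos h2]
            rw [this]
            exact Quotient.sound (symm h2)
          · have h3 : x ∈ MulAction.orbit G c := by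
              rcases hcov x with h | h | h
              · exact absurd h h1
              · exact absurd h h2
              · exact h
            have : F (Quotient.mk _ x) = 2 := by
              simp only [F, Quotient.lift_mk, fa, if_neg h1, if_neg h2]
            rw [this]
            exact Quotient.sound (symm h3)
    · intro i
      rcases fin3cases i with h | h | h <;> subst h
      · show F (Quotient.mk _ a) = 0
        simp only [F, Quotient.lift_mk, fa, if_pos (MulAction.mem_orbit_self a)]
      · show F (Quotient.mk _ b) = 1
        simp only [F, Quotient.lift_mk, fa, if_neg hba, if_pos (MulAction.mem_orbit_self b)]
      · show F (Quotient.mk _ c) = 2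
        simp only [F, Quotient.lift_mk, fa, if_neg hca, if_neg hcb]
  rw [Nat.card_congr eqv, Nat.card_eq_fintype_card, Fintype.card_fin]

theorem Avec_ne : Avec ≠ 0 := by
  intro h
  exact absurd (congrFun h 0) (by decide)

theorem Bvec_ne : Bvec ≠ 0 := by
  intro h
  exact absurd (congrFun h 0) (by decide)

theorem Cvec_ne : Cvec ≠ 0 := by
  intro h
  exact absurd (congrFun h 0) (by decide)

end ThreeOrbits

/-- The action of `GL(3, F₂)` on `ℙ²(F₈)` has exactly three orbits. -/
theorem GL3F2_three_orbits_on_P2F8 :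
    Nat.card (MulAction.orbitRel.Quotient (GL (Fin 3) F₂) ProjPlane) = 3 := by
  classical
  apply ThreeOrbits.card_eq_three (ThreeOrbits.ψ ThreeOrbits.Avec ThreeOrbits.Avec_ne)
    (ThreeOrbits.ψ ThreeOrbits.Bvec ThreeOrbits.Bvec_ne)
    (ThreeOrbits.ψ ThreeOrbits.Cvec ThreeOrbits.Cvec_ne)
  · intro x
    obtain ⟨v, hv, rfl⟩ := ThreeOrbits.ψ_surj x
    rcases ThreeOrbits.cover v hv with h | h | h
    · exact Or.inl ((ThreeOrbits.orbit_iff hv ThreeOrbits.Avec_ne).mpr h)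
    · exact Or.inr (Or.inl ((ThreeOrbits.orbit_iff hv ThreeOrbits.Bvec_ne).mpr h))
    · exact Or.inr (Or.inr ((ThreeOrbits.orbit_iff hv ThreeOrbits.Cvec_ne).mpr h))
  · intro h
    exact ThreeOrbits.notBA
      ((ThreeOrbits.orbit_iff ThreeOrbits.Bvec_ne ThreeOrbits.Avec_ne).mp h)
  · intro h
    exact ThreeOrbits.notCA
      ((ThreeOrbits.orbit_iff ThreeOrbits.Cvec_ne ThreeOrbits.Avec_ne).mp h)
  · intro h
    exact ThreeOrbits.notCB
      ((ThreeOrbits.orbit_iff ThreeOrbits.Cvec_ne ThreeOrbits.Bvec_ne).mp h)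

end
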